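/- If the metrics m_1, …, m_n are pairwise distinct, then any maximizer x* of f on C has at most one coordinate taking a value in the open interval (0,1); all other coordinates equal 0 or 1. -/

import Mathlib

/-- Helper: a maximizer cannot have two fractional coordinates with `m i < m j`. -/
lemma aux_no_two_frac
    (n : ℕ)
    (ω β lam S0 : ℝ) (hω : 0 < ω) (hβ : 0 < β)
    (S ψ : Fin n → ℝ) (hS : ∀ i, 0 < S i)
    (g f : (Fin n → ℝ) → ℝ)
    (hg : ∀ x, g x = 1 + S0 + ∑ i, S i * x i)
    (hf : ∀ x, f x = ω * β * Real.log (g x) - ∑ i, (lam + β * ψ i) * x i)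
    (m : Fin n → ℝ) (hm : ∀ i, m i = (β * ψ i + lam) / (ω * β * S i))
    (x : Fin n → ℝ)
    (hxC : ∀ i, x i ∈ Set.Icc (0:ℝ) 1)
    (hxmax : ∀ y : Fin n → ℝ, (∀ i, y i ∈ Set.Icc (0:ℝ) 1) → f y ≤ f x)
    (i j : Fin n) (hij : i ≠ j)
    (hxi : x i ∈ Set.Ioo (0:ℝ) 1) (hxj : x j ∈ Set.Ioo (0:ℝ) 1)
    (hmlt : m i < m j) : False := by
  obtain ⟨hxi0, hxi1⟩ := hxi
  obtain ⟨hxj0, hxj1⟩ := hxj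
  have hSi := hS i
  have hSj := hS j
  set t : ℝ := min (S i * (1 - x i)) (S j * x j) with ht
  have ht0 : 0 < t := lt_min (by nlinarith) (by nlinarith)
  set y : Fin n → ℝ := fun k => if k = i then x i + t / S i else if k = j then x j - t / S j else x k with hy
  have hyi : y i = x i + t / S i := by simp [hy]
  have hyj : y j = x j - t / S j := by simp [hy, hij, (Ne.symm hij)]
  have hyk : ∀ k, k ≠ i → k ≠ j → y k = x k := by intro k h1 h2; simp [hy, h1, h2]
  -- y is in the box
  have hti : t / S i ≤ 1 - x i := by
    rw [div_le_iff₀ hSi]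
    calc t ≤ S i * (1 - x i) := min_le_left _ _
      _ = (1 - x i) * S i := by ring
  have htj : t / S j ≤ x j := by
    rw [div_le_iff₀ hSj]
    calc t ≤ S j * x j := min_le_right _ _
      _ = x j * S j := by ring
  have hposi : 0 < t / S i := div_pos ht0 hSi
  have hposj : 0 < t / S j := div_pos ht0 hSj
  have hyC : ∀ k, y k ∈ Set.Icc (0:ℝ) 1 := by
    intro k
    by_cases h1 : k = i
    · subst h1; rw [hyi]
      exact ⟨by linarith, by linarith⟩
    · by_cases h2 : k = j
      · subst h2; rw [hyj]
        exact ⟨by linarith, by linarith⟩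
      · rw [hyk k h1 h2]; exact hxC k
  -- sums
  have hpair : ({i, j} : Finset (Fin n)) ⊆ Finset.univ := Finset.subset_univ _
  have hsum : ∀ c : Fin n → ℝ, ∑ k, c k * y k = (∑ k, c k * x k) + c i * (t / S i) - c j * (t / S j) := by
    intro c
    have h1 : ∑ k, (c k * y k - c k * x k) = ∑ k ∈ ({i, j} : Finset (Fin n)), (c k * y k - c k * x k) := by
      refine (Finset.sum_subset hpair ?_).symm
      intro k _ hk
      simp only [Finset.mem_insert, Finset.mem_singleton, not_or] at hk
      rw [hyk k hk.1 hk.2]; ring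
    rw [Finset.sum_pair hij, hyi, hyj] at h1
    have h2 : ∑ k, (c k * y k - c k * x k) = (∑ k, c k * y k) - ∑ k, c k * x k := by
      rw [Finset.sum_sub_distrib]
    rw [h2] at h1
    have : c i * (x i + t / S i) - c i * x i + (c j * (x j - t / S j) - c j * x j)
        = c i * (t / S i) - c j * (t / S j) := by ring
    linarith [h1, this.le, this.ge]
  have hgy : g y = g x := by
    rw [hg, hg, hsum S]
    field_simp
    ring
  -- metric identities
  have hωβ : (0:ℝ) < ω * β := mul_pos hω hβ
  have hmi : (lam + β * ψ i) * (t / S i) = ω * β * m i * t := by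
    rw [hm i]; field_simp; ring
  have hmj : (lam + β * ψ j) * (t / S j) = ω * β * m j * t := by
    rw [hm j]; field_simp; ring
  have hfy : f y = f x + ω * β * (m j - m i) * t := by
    rw [hf, hf, hgy, hsum (fun k => lam + β * ψ k)]
    beta_reduce
    rw [hmi, hmj]
    ring
  have hgt : f x < f y := by
    rw [hfy]
    have := mul_pos (mul_pos hωβ (sub_pos.mpr hmlt)) ht0
    linarith
  exact absurd (hxmax y hyC) (not_le.mpr hgt)

theorem at_most_one_fractional_coordinate
    (n : ℕ) (hn : 1 ≤ n)
    (ω β lam S0 : ℝ) (hω : 0 < ω) (hβ : 0 < β) (hlam : 0 ≤ lam) (hS0 : 0 ≤ S0)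
    (S ψ : Fin n → ℝ) (hS : ∀ i, 0 < S i) (hψ : ∀ i, 0 ≤ ψ i)
    (g f : (Fin n → ℝ) → ℝ)
    (hg : ∀ x, g x = 1 + S0 + ∑ i, S i * x i)
    (hf : ∀ x, f x = ω * β * Real.log (g x) - ∑ i, (lam + β * ψ i) * x i)
    (m : Fin n → ℝ) (hm : ∀ i, m i = (β * ψ i + lam) / (ω * β * S i))
    (hdistinct : ∀ i j : Fin n, i ≠ j → m i ≠ m j)
    (x : Fin n → ℝ)
    (hxC : ∀ i, x i ∈ Set.Icc (0:ℝ) 1)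
    (hxmax : ∀ y : Fin n → ℝ, (∀ i, y i ∈ Set.Icc (0:ℝ) 1) → f y ≤ f x) :
    ∀ i j : Fin n, x i ∈ Set.Ioo (0:ℝ) 1 → x j ∈ Set.Ioo (0:ℝ) 1 → i = j := by
  intro i j hxi hxj
  by_contra hij
  rcases lt_trichotomy (m i) (m j) with h | h | h
  · exact aux_no_two_frac n ω β lam S0 hω hβ S ψ hS g f hg hf m hm x hxC hxmax i j hij hxi hxj h
  · exact hdistinct i j hij h
  · exact aux_no_two_frac n ω β lam S0 hω hβ S ψ hS g f hg hf m hm x hxC hxmax j i (Ne.symm hij) hxj hxi h
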